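/- Let Q_ℓ be the generalized quaternion group of order ℓ = 2^j ≥ 8 and let Δ(g) = det(I₂ − γ₁(g)) where γ₁ is the standard 2-dimensional fixed point free representation. Define c_i = ℓ^{-1} Σ_{g ∈ Q_ℓ, g ≠ 1} Δ(g)^i. Then c₀ = (ℓ−1)/ℓ, and for every integer i > 0, c_{2i} is an integer and c_{2i−1} is an even integer. -/

import Mathlib

open Complex Matrix

/-- primitive (2n)-th root of unity ζ = e^{2πi/(2n)} = e^{4πi/ℓ} for ℓ = 4n. -/
noncomputable def zeta (n : ℕ) : ℂ := Complex.exp (2 * Real.pi * Complex.I / (2 * n))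

/-- The 2-dimensional representation γ_u of the generalized quaternion group,
with γ_u(ξ) = diag(ζ^u, ζ^{-u}) and γ_u(J) = [[0,(-1)^u],[1,0]];
here `a i` = ξ^i and `xa i` = J ξ^i. -/
noncomputable def gam (n : ℕ) (u : ℤ) : QuaternionGroup n → Matrix (Fin 2) (Fin 2) ℂ
  | .a i => !![zeta n ^ (u * (i.val : ℤ)), 0; 0, zeta n ^ (-(u * (i.val : ℤ)))]
  | .xa i => !![0, (-1 : ℂ) ^ u * zeta n ^ (-(u * (i.val : ℤ))); zeta n ^ (u * (i.val : ℤ)), 0]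

/-- character of γ_u -/
noncomputable def chi (n : ℕ) (u : ℤ) (g : QuaternionGroup n) : ℂ := Matrix.trace (gam n u g)

/-- κ₁ : ξ ↦ -1, J ↦ 1 -/
def kappa1 (n : ℕ) : QuaternionGroup n → ℂ
  | .a i => (-1) ^ i.val
  | .xa i => (-1) ^ i.val

/-- κ₂ : ξ ↦ 1, J ↦ -1 -/
def kappa2 (n : ℕ) : QuaternionGroup n → ℂ
  | .a _ => 1
  | .xa _ => -1

/-- κ₃ : ξ ↦ -1, J ↦ -1 -/
def kappa3 (n : ℕ) : QuaternionGroup n → ℂ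
  | .a i => (-1) ^ i.val
  | .xa i => -(-1) ^ i.val

/-- Θ₁ : value ℓ/4 = n at ±I = ξ^{±n/2}, value -2 at ξ^{2i}J, 0 otherwise. -/
def Theta1 (n : ℕ) : QuaternionGroup n → ℂ
  | .a i => if i = ((n / 2 : ℕ) : ZMod (2 * n)) ∨ i = -((n / 2 : ℕ) : ZMod (2 * n)) then (n : ℂ) else 0
  | .xa i => if Even i.val then -2 else 0

/-- Θ₂ : value ℓ/4 = n at ±I, value -2 at ξ^{2i+1}J, 0 otherwise. -/
def Theta2 (n : ℕ) : QuaternionGroup n → ℂ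
  | .a i => if i = ((n / 2 : ℕ) : ZMod (2 * n)) ∨ i = -((n / 2 : ℕ) : ZMod (2 * n)) then (n : ℂ) else 0
  | .xa i => if Even i.val then 0 else -2

/-- Δ(g) = det(I₂ - γ₁(g)) -/
noncomputable def Del (n : ℕ) (g : QuaternionGroup n) : ℂ := Matrix.det (1 - gam n 1 g)

/-- c_i = ℓ⁻¹ Σ_{g ≠ 1} Δ(g)^i. -/
noncomputable def cc (n : ℕ) [NeZero n] (i : ℕ) : ℂ :=
  (4 * n : ℂ)⁻¹ * ∑ g ∈ Finset.univ.erase (1 : QuaternionGroup n), Del n g ^ i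

lemma zeta_ne_zero (n : ℕ) : zeta n ≠ 0 := Complex.exp_ne_zero _

lemma del_a (n : ℕ) (i : ZMod (2*n)) :
    Del n (.a i) = (1 - zeta n ^ (i.val : ℤ)) * (1 - zeta n ^ (-(i.val : ℤ))) := by
  simp [Del, gam, Matrix.det_fin_two, Matrix.sub_apply, Matrix.one_apply]

lemma del_xa (n : ℕ) (i : ZMod (2*n)) : Del n (.xa i) = 2 := by
  simp [Del, gam, Matrix.det_fin_two, Matrix.sub_apply, Matrix.one_apply]
  rw [inv_mul_cancel₀ (pow_ne_zero _ (zeta_ne_zero n))]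
  norm_num

lemma zeta_prim (n : ℕ) (hn : n ≠ 0) : IsPrimitiveRoot (zeta n) (2*n) := by
  have := Complex.isPrimitiveRoot_exp (2*n) (by positivity)
  convert this using 1
  unfold zeta
  congr 1
  push_cast; ring

lemma sum_zeta_pow (n : ℕ) [NeZero n] (m : ℤ) :
    ∑ i : ZMod (2*n), zeta n ^ ((i.val : ℤ) * m) =
      if ((2*n : ℕ) : ℤ) ∣ m then ((2*n : ℕ) : ℂ) else 0 := by
  have hn : (n : ℕ) ≠ 0 := NeZero.ne n
  have hζ := zeta_prim n hn
  have h2n : (2*n : ℕ) ≠ 0 := by positivity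
  have key : ∑ i : ZMod (2*n), zeta n ^ ((i.val : ℤ) * m)
      = ∑ t ∈ Finset.range (2*n), (zeta n ^ m) ^ t := by
    refine Finset.sum_nbij' (fun i => i.val) (fun t => (t : ZMod (2*n))) ?_ ?_ ?_ ?_ ?_
    · intro i _; exact Finset.mem_range.mpr (ZMod.val_lt i)
    · intro t _; exact Finset.mem_univ _
    · intro i _; exact ZMod.natCast_zmod_val i
    · intro t ht; exact ZMod.val_natCast_of_lt (Finset.mem_range.mp ht)
    · intro i _; rw [mul_comm, _root_.zpow_mul, zpow_natCast]
  rw [key]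
  by_cases hdvd : ((2*n : ℕ) : ℤ) ∣ m
  · rw [if_pos hdvd]
    have h1 : zeta n ^ m = 1 := (hζ.zpow_eq_one_iff_dvd m).mpr hdvd
    simp [h1]
  · rw [if_neg hdvd]
    have h1 : zeta n ^ m ≠ 1 := fun h => hdvd ((hζ.zpow_eq_one_iff_dvd m).mp h)
    rw [geom_sum_eq h1]
    have : (zeta n ^ m) ^ (2*n) = 1 := by
      rw [← zpow_natCast, ← _root_.zpow_mul, mul_comm, _root_.zpow_mul, zpow_natCast, hζ.pow_eq_one, _root_.one_zpow]
    rw [this, sub_self, zero_div]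

def Acoef (n k : ℕ) : ℕ :=
  ∑ t ∈ (Finset.range (2*k+1)).filter (fun t : ℕ => ((t : ZMod (2*n)) = ((k : ℕ) : ZMod (2*n)))),
    (2*k).choose t

lemma del_pow_aux (x : ℂ) (hx : x ≠ 0) (k : ℕ) :
    ((1 - x) * (1 - x⁻¹))^k
      = ∑ t ∈ Finset.range (2*k+1), ((2*k).choose t : ℂ) * (-1)^(t+k) * ((x⁻¹)^k * x^t) := by
  have h1 : (1 - x) * (1 - x⁻¹) = -x⁻¹ * (1 - x)^2 := by field_simp; ring
  rw [h1, mul_pow, ← pow_mul, show (1:ℂ) - x = -x + 1 by ring, add_pow]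
  simp only [one_pow, mul_one]
  rw [Finset.mul_sum]
  refine Finset.sum_congr rfl fun t ht => ?_
  rw [neg_pow, neg_pow, pow_add]
  ring

lemma del_a_pow (n k : ℕ) (i : ZMod (2*n)) :
    Del n (.a i) ^ k = ∑ t ∈ Finset.range (2*k+1),
      ((2*k).choose t : ℂ) * (-1)^(t+k) * zeta n ^ ((i.val : ℤ) * ((t : ℤ) - (k : ℤ))) := by
  have hz := zeta_ne_zero n
  rw [del_a, _root_.zpow_neg, del_pow_aux _ (zpow_ne_zero _ hz) k]
  refine Finset.sum_congr rfl fun t ht => ?_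
  congr 1
  rw [← _root_.zpow_neg, ← zpow_natCast (zeta n ^ (-(i.val : ℤ))) k,
    ← zpow_natCast (zeta n ^ ((i.val : ℤ))) t, ← _root_.zpow_mul, ← _root_.zpow_mul,
    ← zpow_add₀ hz]
  congr 1
  ring

lemma cond_iff (n k t : ℕ) : (((2*n:ℕ):ℤ) ∣ ((t:ℤ) - (k:ℤ))) ↔
    ((t : ZMod (2*n)) = ((k:ℕ) : ZMod (2*n))) := by
  rw [← ZMod.intCast_zmod_eq_zero_iff_dvd]
  push_cast
  rw [sub_eq_zero]

lemma sum_del_a (n k : ℕ) [NeZero n] :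
    ∑ i : ZMod (2*n), Del n (.a i) ^ k = ((2*n : ℕ) : ℂ) * ((Acoef n k : ℕ) : ℂ) := by
  have h2 : (2:ℤ) ∣ ((2*n : ℕ):ℤ) := by push_cast; exact ⟨n, by ring⟩
  calc ∑ i : ZMod (2*n), Del n (.a i) ^ k
      = ∑ t ∈ Finset.range (2*k+1), ∑ i : ZMod (2*n),
          ((2*k).choose t : ℂ) * (-1)^(t+k) * zeta n ^ ((i.val : ℤ) * ((t:ℤ) - (k:ℤ))) := by
        simp_rw [del_a_pow]; exact Finset.sum_comm
    _ = ∑ t ∈ Finset.range (2*k+1), ((2*k).choose t : ℂ) * (-1)^(t+k) *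
          (if ((2*n:ℕ):ℤ) ∣ ((t:ℤ) - (k:ℤ)) then ((2*n:ℕ):ℂ) else 0) := by
        refine Finset.sum_congr rfl fun t _ => ?_
        rw [← Finset.mul_sum, sum_zeta_pow]
    _ = ∑ t ∈ (Finset.range (2*k+1)).filter
          (fun t : ℕ => ((t : ZMod (2*n)) = ((k : ℕ) : ZMod (2*n)))),
          ((2*k).choose t : ℂ) * ((2*n:ℕ):ℂ) := by
        rw [Finset.sum_filter]
        refine Finset.sum_congr rfl fun t _ => ?_
        by_cases hd : ((2*n:ℕ):ℤ) ∣ ((t:ℤ) - (k:ℤ))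
        · rw [if_pos hd, if_pos ((cond_iff n k t).mp hd)]
          have he : Even ((t:ℤ) - (k:ℤ)) := by
            obtain ⟨c, hc⟩ := dvd_trans h2 hd
            exact ⟨c, by linarith⟩
          have he2 : Even (t + k) := by
            rw [Int.even_sub] at he
            rw [Nat.even_add]
            simpa using he
          rw [he2.neg_one_pow]; ring
        · rw [if_neg hd, if_neg (fun hc => hd ((cond_iff n k t).mpr hc))]
          ring
    _ = ((2*n : ℕ) : ℂ) * ((Acoef n k : ℕ) : ℂ) := by
        rw [← Finset.sum_mul, mul_comm, Acoef]
        push_cast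
        ring

def qEquiv (n : ℕ) : ZMod (2*n) ⊕ ZMod (2*n) ≃ QuaternionGroup n where
  toFun i := match i with
    | Sum.inl j => .a j
    | Sum.inr j => .xa j
  invFun i := match i with
    | .a j => Sum.inl j
    | .xa j => Sum.inr j
  left_inv := by rintro (x | x) <;> rfl
  right_inv := by rintro (x | x) <;> rfl

lemma sum_group (n : ℕ) [NeZero n] (f : QuaternionGroup n → ℂ) :
    ∑ g : QuaternionGroup n, f g
      = (∑ i : ZMod (2*n), f (.a i)) + ∑ i : ZMod (2*n), f (.xa i) := by
  rw [← Equiv.sum_comp (qEquiv n) f, Fintype.sum_sum_type]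
  rfl

lemma cc_eq (n k : ℕ) [NeZero n] (hk : 1 ≤ k) :
    cc n k = (((Acoef n k : ℕ) : ℂ) + 2^k) / 2 := by
  have h2n : NeZero (2*n) := ⟨by have := NeZero.ne n; positivity⟩
  have hge : (0:ℕ) < n := Nat.pos_of_ne_zero (NeZero.ne n)
  have hsum : ∑ g ∈ Finset.univ.erase (1 : QuaternionGroup n), Del n g ^ k
      = ((2*n : ℕ) : ℂ) * ((Acoef n k : ℕ) : ℂ) + ((2*n : ℕ) : ℂ) * 2^k := by
    have h1 : Del n (1 : QuaternionGroup n) ^ k = 0 := by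
      rw [QuaternionGroup.one_def, del_a]
      have : ((0 : ZMod (2*n)).val : ℤ) = 0 := by simp
      rw [this]
      simp [zero_pow (by omega : k ≠ 0)]
    rw [Finset.sum_erase (f := fun g => Del n g ^ k) Finset.univ h1, sum_group n (fun g => Del n g ^ k), sum_del_a]
    congr 1
    simp only [del_xa]
    rw [Finset.sum_const, Finset.card_univ, ZMod.card]
    simp
  rw [cc, hsum]
  have h4 : ((4 * n : ℕ) : ℂ) ≠ 0 := by
    simp only [Nat.cast_ne_zero]; omega
  push_cast at h4 ⊢
  have hn0 : (n:ℂ) ≠ 0 := Nat.cast_ne_zero.mpr (NeZero.ne n)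
  field_simp
  ring

lemma acoef_cast (n k : ℕ) {R : Type*} [CommRing R]
    (h2 : ∀ t, t ∈ (Finset.range (2*k+1)).filter
        (fun t : ℕ => ((t : ZMod (2*n)) = ((k:ℕ) : ZMod (2*n)))) → t ≠ k →
        ((2*k).choose t : R) + ((2*k).choose t : R) = 0) :
    ((Acoef n k : ℕ) : R) = ((2*k).choose k : R) := by
  classical
  set F := (Finset.range (2*k+1)).filter
      (fun t : ℕ => ((t : ZMod (2*n)) = ((k:ℕ) : ZMod (2*n)))) with hF
  have hkF : k ∈ F := Finset.mem_filter.mpr ⟨Finset.mem_range.mpr (by omega), rfl⟩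
  have hA : ((Acoef n k : ℕ) : R) = ∑ t ∈ F, ((2*k).choose t : R) := by
    rw [Acoef]; push_cast; rfl
  rw [hA, ← Finset.add_sum_erase F _ hkF]
  have hmem : ∀ t ∈ F.erase k, t ≤ 2*k ∧ t ≠ k ∧ t ∈ F := by
    intro t ht
    have h := Finset.mem_erase.mp ht
    have hr := Finset.mem_range.mp (Finset.mem_filter.mp h.2).1
    exact ⟨by omega, h.1, h.2⟩
  have hzero : ∑ t ∈ F.erase k, ((2*k).choose t : R) = 0 := by
    refine Finset.sum_involution (fun t _ => 2*k - t) ?_ ?_ ?_ ?_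
    · intro t ht
      obtain ⟨h1, h3, h4⟩ := hmem t ht
      rw [Nat.choose_symm h1]
      exact h2 t h4 h3
    · intro t ht _
      obtain ⟨h1, h3, _⟩ := hmem t ht
      show 2*k - t ≠ t
      omega
    · intro t ht
      obtain ⟨h1, h3, h4⟩ := hmem t ht
      show 2*k - t ∈ F.erase k
      refine Finset.mem_erase.mpr ⟨by omega, Finset.mem_filter.mpr ⟨Finset.mem_range.mpr (by omega), ?_⟩⟩
      have hc : ((t : ZMod (2*n)) = ((k:ℕ) : ZMod (2*n))) := (Finset.mem_filter.mp h4).2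
      have : ((2*k - t : ℕ) : ZMod (2*n))
          = ((2*k : ℕ) : ZMod (2*n)) - ((t : ℕ) : ZMod (2*n)) := by
        rw [Nat.cast_sub h1]
      rw [this, hc]
      push_cast
      ring
    · intro t ht
      obtain ⟨h1, _, _⟩ := hmem t ht
      show 2*k - (2*k - t) = t
      omega
  rw [hzero, add_zero]

lemma choose_even_of_odd {N t : ℕ} (hN : Even N) (ht : Odd t) : 2 ∣ N.choose t := by
  rcases le_or_gt t N with h | h
  · obtain ⟨s, rfl⟩ : ∃ s, t = s + 1 := by
      rcases t with _ | s
      · exact absurd ht (by simp)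
      · exact ⟨s, rfl⟩
    obtain ⟨M, rfl⟩ : ∃ M, N = M + 1 := ⟨N - 1, by omega⟩
    have key := Nat.add_one_mul_choose_eq M s
    have h2 : 2 ∣ (M+1) * M.choose s := Dvd.dvd.mul_right (even_iff_two_dvd.mp hN) _
    rw [key] at h2
    rcases (Nat.Prime.dvd_mul Nat.prime_two).mp h2 with h3 | h3
    · exact h3
    · exact absurd (even_iff_two_dvd.mpr h3) (by simpa using ht)
  · rw [Nat.choose_eq_zero_of_lt h]; exact dvd_zero 2

lemma two_dvd_central (k : ℕ) (hk : 1 ≤ k) : 2 ∣ (2*k).choose k :=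
  Nat.two_dvd_centralBinom_of_one_le hk

lemma four_dvd_central (k : ℕ) (hk : 3 ≤ k) (hodd : Odd k) : 4 ∣ (2*k).choose k := by
  obtain ⟨m, rfl⟩ : ∃ m, k = m + 1 := ⟨k - 1, by omega⟩
  have h1 := Nat.succ_mul_centralBinom_succ m
  obtain ⟨c, hc⟩ := Nat.two_dvd_centralBinom_of_one_le (show 0 < m by omega)
  have h4 : 4 ∣ (m + 1) * Nat.centralBinom (m+1) := by
    rw [h1, hc]; exact ⟨(2*m+1)*c, by ring⟩
  have hmodd : Odd (m+1) := hodd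
  have h2 : Nat.Coprime 2 (m+1) := Nat.coprime_two_left.mpr hmodd
  have hco : Nat.Coprime 4 (m+1) := by
    rw [show (4:ℕ) = 2^2 from rfl]
    exact Nat.Coprime.pow_left 2 h2
  have := (Nat.Coprime.dvd_mul_left hco).mp (by rwa [mul_comm] at h4 ; )
  exact this

lemma cc_zero (n : ℕ) [NeZero n] : cc n 0 = ((4*n:ℂ) - 1)/(4*n) := by
  have hn : 0 < n := Nat.pos_of_ne_zero (NeZero.ne n)
  have h1 : (1:ℕ) ≤ 4*n := by omega
  rw [cc]
  simp only [pow_zero]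
  rw [Finset.sum_const, Finset.card_erase_of_mem (Finset.mem_univ _), Finset.card_univ,
    QuaternionGroup.card, nsmul_eq_mul, Nat.cast_sub h1]
  push_cast
  have h4 : (4*(n:ℂ)) ≠ 0 := by
    simp only [mul_ne_zero_iff]
    exact ⟨by norm_num, Nat.cast_ne_zero.mpr (NeZero.ne n)⟩
  field_simp

lemma even_case (n k : ℕ) (hk : 2 ≤ k) (hke : Even k) : 2 ∣ Acoef n k + 2^k := by
  rw [← ZMod.natCast_eq_zero_iff]
  push_cast
  have hA : ((Acoef n k : ℕ) : ZMod 2) = ((2*k).choose k : ZMod 2) := by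
    refine acoef_cast n k (fun t _ _ => ?_)
    have : ((2*k).choose t : ZMod 2) + ((2*k).choose t : ZMod 2)
        = 2 * ((2*k).choose t : ZMod 2) := by ring
    rw [this, show (2 : ZMod 2) = 0 by rfl, zero_mul]
  rw [hA]
  obtain ⟨c, hc⟩ := two_dvd_central k (by omega)
  rw [hc]
  push_cast
  rw [show ((2:ZMod 2)) = 0 by rfl]
  simp [zero_pow (by omega : k ≠ 0)]

lemma odd_big_case (n k : ℕ) (hk : 3 ≤ k) (hko : Odd k) : 4 ∣ Acoef n k + 2^k := by
  rw [← ZMod.natCast_eq_zero_iff]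
  push_cast
  have hA : ((Acoef n k : ℕ) : ZMod 4) = ((2*k).choose k : ZMod 4) := by
    refine acoef_cast n k (fun t ht htk => ?_)
    have hcond := (Finset.mem_filter.mp ht).2
    have hdvd : ((2*n:ℕ):ℤ) ∣ ((t:ℤ) - (k:ℤ)) := (cond_iff n k t).mpr hcond
    have h2 : (2:ℤ) ∣ ((t:ℤ) - (k:ℤ)) :=
      dvd_trans (by push_cast; exact ⟨n, by ring⟩) hdvd
    have hto : Odd t := by
      rcases hko with ⟨r, hr⟩
      rcases h2 with ⟨c, hc⟩
      refine ⟨(r + c).toNat, ?_⟩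
      omega
    obtain ⟨c, hc⟩ := choose_even_of_odd (even_two_mul k) hto
    rw [hc]
    have : ((2*c : ℕ) : ZMod 4) + ((2*c : ℕ) : ZMod 4) = ((4*c : ℕ) : ZMod 4) := by
      push_cast; ring
    rw [this, ZMod.natCast_eq_zero_iff]
    exact ⟨c, rfl⟩
  rw [hA]
  obtain ⟨c, hc⟩ := four_dvd_central k hk hko
  obtain ⟨s, hs⟩ : ∃ s, k = s + 2 := ⟨k - 2, by omega⟩
  rw [hc, hs]
  push_cast
  rw [pow_add]
  have h40 : (4 : ZMod 4) = 0 := rfl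
  have h22 : (2 : ZMod 4)^2 = 0 := by decide
  rw [h22, h40]
  ring

lemma one_case (n : ℕ) (hn : 2 ≤ n) : 4 ∣ Acoef n 1 + 2^1 := by
  rw [← ZMod.natCast_eq_zero_iff]
  push_cast
  have hA : ((Acoef n 1 : ℕ) : ZMod 4) = ((2*1).choose 1 : ZMod 4) := by
    refine acoef_cast n 1 (fun t ht htk => ?_)
    exfalso
    have hcond := (Finset.mem_filter.mp ht).2
    have htr := Finset.mem_range.mp (Finset.mem_filter.mp ht).1
    have hlt : t < 2*n := by omega
    have h1 : ((t : ZMod (2*n))).val = t := ZMod.val_natCast_of_lt hlt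
    have h2 : (((1:ℕ) : ZMod (2*n))).val = 1 := by
      rw [Nat.cast_one]
      haveI : Fact (1 < 2*n) := ⟨by omega⟩
      exact ZMod.val_one (2*n)
    apply htk
    rw [← h1, hcond, h2]
  rw [hA]
  norm_num
  decide

/-- c₀ = (ℓ-1)/ℓ, and for i > 0, c_{2i} is an integer and c_{2i-1} is an even integer. -/
theorem stmt8 (j n : ℕ) [NeZero n] (hj : 3 ≤ j) (hn : 4 * n = 2 ^ j) :
    cc n 0 = ((4 * n : ℂ) - 1) / (4 * n) ∧
    ∀ i : ℕ, 0 < i → (∃ m : ℤ, cc n (2 * i) = m) ∧ (∃ m : ℤ, cc n (2 * i - 1) = 2 * m) := by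
  have hpow : 8 ≤ 2^j := by
    calc (8:ℕ) = 2^3 := rfl
    _ ≤ 2^j := Nat.pow_le_pow_right (by norm_num) hj
  have hn2 : 2 ≤ n := by omega
  refine ⟨cc_zero n, fun i hi => ⟨?_, ?_⟩⟩
  · obtain ⟨c, hc⟩ := even_case n (2*i) (by omega) (even_two_mul i)
    refine ⟨c, ?_⟩
    rw [cc_eq n (2*i) (by omega)]
    have h : ((Acoef n (2*i) : ℕ) : ℂ) + 2^(2*i) = ((Acoef n (2*i) + 2^(2*i) : ℕ) : ℂ) := by
      push_cast; ring
    rw [h, hc]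
    push_cast
    ring
  · have h4 : 4 ∣ Acoef n (2*i-1) + 2^(2*i-1) := by
      rcases eq_or_lt_of_le (Nat.succ_le_of_lt hi) with h1 | h1
      · have : 2*i - 1 = 1 := by omega
        rw [this]
        exact one_case n hn2
      · exact odd_big_case n (2*i-1) (by omega) ⟨i-1, by omega⟩
    obtain ⟨c, hc⟩ := h4
    refine ⟨c, ?_⟩
    rw [cc_eq n (2*i-1) (by omega)]
    have h : ((Acoef n (2*i-1) : ℕ) : ℂ) + 2^(2*i-1)
        = ((Acoef n (2*i-1) + 2^(2*i-1) : ℕ) : ℂ) := by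
      push_cast; ring
    rw [h, hc]
    push_cast
    ring
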